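/- Let P be a symmetric positive-definite m₁×m₁ real matrix, Q a symmetric positive-definite m₂×m₂ real matrix, Γ an m₁×m₂ real matrix, and c > 0. Set D := (P·Γ) ⊗̄ Q, E := P ⊗ Q, and Σ := (Γᵀ·P·Γ) ⊙ Q. Then D·Dᵀ + c·E and c·I_{m₂} + Σ are invertible, and for every y ∈ ℝ^{m₂}: (D·Dᵀ + c·E)⁻¹·D·y = (Γ ⊗̄ I_{m₂})·(c·I_{m₂} + Σ)⁻¹·y. -/

import Mathlib

open Matrix Kronecker

/-- The column-wise Kronecker (Khatri–Rao) product of `A : m₁×n` and `B : m₂×n`: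
the `(m₁·m₂)×n` matrix with entries `(A ⊗̄ B)[(i,s), q] = A i q * B s q`. -/
def khatriRao {R : Type*} [Mul R] {m₁ m₂ n : Type*}
    (A : Matrix m₁ n R) (B : Matrix m₂ n R) : Matrix (m₁ × m₂) n R :=
  Matrix.of fun p q => A p.1 q * B p.2 q

lemma kron_mul_khatriRao {R : Type*} [CommSemiring R] {l₁ l₂ m₁ m₂ n : Type*}
    [Fintype m₁] [Fintype m₂]
    (A : Matrix l₁ m₁ R) (B : Matrix l₂ m₂ R) (C : Matrix m₁ n R) (Dm : Matrix m₂ n R) :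
    (A ⊗ₖ B) * khatriRao C Dm = khatriRao (A * C) (B * Dm) := by
  ext ⟨i, s⟩ q
  simp only [khatriRao, mul_apply, kroneckerMap_apply, of_apply, Fintype.sum_prod_type,
    Finset.mul_sum, Finset.sum_mul]
  rw [Finset.sum_comm]
  exact Finset.sum_congr rfl fun j _ => Finset.sum_congr rfl fun t _ => by ring

lemma khatriRao_transpose_mul_khatriRao {R : Type*} [CommSemiring R] {m₁ m₂ n n' : Type*}
    [Fintype m₁] [Fintype m₂]
    (A : Matrix m₁ n R) (B : Matrix m₂ n R) (C : Matrix m₁ n' R) (Dm : Matrix m₂ n' R) :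
    (khatriRao A B)ᵀ * khatriRao C Dm = (Aᵀ * C) ⊙ (Bᵀ * Dm) := by
  ext p q
  simp only [khatriRao, mul_apply, transpose_apply, of_apply, Fintype.sum_prod_type,
    hadamard_apply, Finset.mul_sum, Finset.sum_mul]
  rw [Finset.sum_comm]
  exact Finset.sum_congr rfl fun j _ => Finset.sum_congr rfl fun t _ => by ring

lemma hadamard_transpose' {R m n : Type*} [Mul R] (A B : Matrix m n R) :
    (A ⊙ B)ᵀ = Aᵀ ⊙ Bᵀ := by
  ext i j; simp [Matrix.hadamard_apply]

lemma real_conjTranspose_eq_transpose {m n : Type*} (A : Matrix m n ℝ) : Aᴴ = Aᵀ := by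
  ext i j; simp [conjTranspose_apply]

lemma posDef_of_posSemidef_isUnit {n : Type*} [Fintype n] [DecidableEq n]
    {A : Matrix n n ℝ} (h : A.PosSemidef) (hu : IsUnit A) : A.PosDef := by
  rw [posDef_iff_dotProduct_mulVec]
  have h' := posSemidef_iff_dotProduct_mulVec.mp h
  refine ⟨h.1, fun x hx => lt_of_le_of_ne (h'.2 x) fun heq => hx ?_⟩
  have hAx : A *ᵥ x = 0 := (h.dotProduct_mulVec_zero_iff x).mp heq.symm
  have hdet : IsUnit A.det := (Matrix.isUnit_iff_isUnit_det A).mp hu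
  have := congrArg (fun v => A⁻¹ *ᵥ v) hAx
  simpa [Matrix.mulVec_mulVec, Matrix.nonsing_inv_mul A hdet] using this

lemma posDef_smul {n : Type*} [Fintype n] [DecidableEq n]
    {A : Matrix n n ℝ} (h : A.PosDef) {c : ℝ} (hc : 0 < c) : (c • A).PosDef := by
  rw [posDef_iff_dotProduct_mulVec]
  refine ⟨?_, fun x hx => ?_⟩
  · have := h.1
    unfold Matrix.IsHermitian at *
    ext i j
    simp only [conjTranspose_apply, Matrix.smul_apply, star_trivial, smul_eq_mul]
    have := congrFun (congrFun h.1 i) j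
    simp only [conjTranspose_apply, star_trivial] at this
    rw [this]
  · have := (posDef_iff_dotProduct_mulVec.mp h).2 hx
    rw [smul_mulVec, dotProduct_smul]
    exact smul_pos hc this

open scoped MatrixOrder in
lemma Matrix.posSemidef_iff_eq_transpose_mul_self {n : Type*} [Fintype n] [DecidableEq n]
    {A : Matrix n n ℝ} : A.PosSemidef ↔ ∃ B : Matrix n n ℝ, A = Bᴴ * B := by
  refine ⟨fun h => ?_, fun ⟨B, hB⟩ => hB ▸ Matrix.posSemidef_conjTranspose_mul_self B⟩
  obtain ⟨B, hB⟩ := CStarAlgebra.nonneg_iff_eq_star_mul_self.mp h.nonneg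
  exact ⟨B, hB⟩

/-- **Efficient closed-form KPV solution.** For symmetric positive-definite `P : m₁×m₁`
and `Q : m₂×m₂`, any `Γ : m₁×m₂` and `c > 0`, with `D := (P·Γ) ⊗̄ Q`, `E := P ⊗ Q` and
`Σ := (Γᵀ·P·Γ) ⊙ Q`, the matrices `D·Dᵀ + c·E` and `c·I + Σ` are invertible and for
every `y ∈ ℝ^{m₂}`: `(D·Dᵀ + c·E)⁻¹·D·y = (Γ ⊗̄ I)·(c·I + Σ)⁻¹·y`. -/
theorem kpv_efficient_closed_form
    (m₁ m₂ : ℕ)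
    (P : Matrix (Fin m₁) (Fin m₁) ℝ) (Q : Matrix (Fin m₂) (Fin m₂) ℝ)
    (hP : P.PosDef) (hQ : Q.PosDef)
    (Γ : Matrix (Fin m₁) (Fin m₂) ℝ) (c : ℝ) (hc : 0 < c)
    (D : Matrix (Fin m₁ × Fin m₂) (Fin m₂) ℝ) (hD : D = khatriRao (P * Γ) Q)
    (E : Matrix (Fin m₁ × Fin m₂) (Fin m₁ × Fin m₂) ℝ) (hE : E = P ⊗ₖ Q)
    (S : Matrix (Fin m₂) (Fin m₂) ℝ) (hS : S = (Γᵀ * P * Γ) ⊙ Q) :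
    IsUnit (D * Dᵀ + c • E) ∧
    IsUnit (c • (1 : Matrix (Fin m₂) (Fin m₂) ℝ) + S) ∧
    ∀ y : Fin m₂ → ℝ,
      (D * Dᵀ + c • E)⁻¹ *ᵥ (D *ᵥ y) =
        (khatriRao Γ (1 : Matrix (Fin m₂) (Fin m₂) ℝ) *
            (c • (1 : Matrix (Fin m₂) (Fin m₂) ℝ) + S)⁻¹) *ᵥ y := by
  set G : Matrix (Fin m₁ × Fin m₂) (Fin m₂) ℝ := khatriRao Γ 1 with hG
  -- transpose symmetry of P and Q
  have hPt : Pᵀ = P := by rw [← real_conjTranspose_eq_transpose]; exact hP.1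
  have hQt : Qᵀ = Q := by rw [← real_conjTranspose_eq_transpose]; exact hQ.1
  -- E is positive semidefinite
  have hEpsd : E.PosSemidef := by
    obtain ⟨B, hB⟩ := Matrix.posSemidef_iff_eq_transpose_mul_self.mp hP.posSemidef
    obtain ⟨C, hC⟩ := Matrix.posSemidef_iff_eq_transpose_mul_self.mp hQ.posSemidef
    have : E = (B ⊗ₖ C)ᴴ * (B ⊗ₖ C) := by
      rw [hE, hB, hC, real_conjTranspose_eq_transpose B, real_conjTranspose_eq_transpose C,
        Matrix.mul_kronecker_mul, real_conjTranspose_eq_transpose,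
        ← Matrix.kroneckerMap_transpose]
    rw [this]
    exact Matrix.posSemidef_conjTranspose_mul_self _
  -- E is invertible
  have hEunit : IsUnit E := by
    rw [Matrix.isUnit_iff_isUnit_det, hE, Matrix.det_kronecker, Fintype.card_fin, Fintype.card_fin]
    exact (mul_pos (pow_pos hP.det_pos m₂) (pow_pos hQ.det_pos m₁)).ne'.isUnit
  have hEpd : E.PosDef := posDef_of_posSemidef_isUnit hEpsd hEunit
  -- E * G = D
  have hEG : E * G = D := by
    rw [hE, hG, kron_mul_khatriRao, Matrix.mul_one, hD]
  -- Dᵀ * G = S   and   Gᵀ * D = S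
  have hDtG : Dᵀ * G = S := by
    rw [hD, hG, khatriRao_transpose_mul_khatriRao, Matrix.transpose_mul, hPt, hQt,
      Matrix.mul_one, hS]
  have hSt : Sᵀ = S := by
    rw [hS, hadamard_transpose', Matrix.transpose_mul, Matrix.transpose_mul,
      Matrix.transpose_transpose, hPt, hQt, ← Matrix.mul_assoc]
  have hGtD : Gᵀ * D = S := by
    calc Gᵀ * D = (Dᵀ * G)ᵀ := by rw [Matrix.transpose_mul, Matrix.transpose_transpose]
      _ = Sᵀ := by rw [hDtG]
      _ = S := hSt
  have hSGED : S = Gᵀ * E * G := by rw [Matrix.mul_assoc, hEG, hGtD]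
  -- M := D * Dᵀ + c • E is positive definite
  have hM : (D * Dᵀ + c • E).PosDef := by
    have h1 : (D * Dᵀ).PosSemidef := by
      have := Matrix.posSemidef_self_mul_conjTranspose D
      rwa [real_conjTranspose_eq_transpose] at this
    exact Matrix.PosDef.posSemidef_add h1 (posDef_smul hEpd hc)
  -- N := c • 1 + S is positive definite
  have hSpsd : S.PosSemidef := by
    rw [hSGED, ← real_conjTranspose_eq_transpose]
    exact hEpsd.conjTranspose_mul_mul_same G
  have hN : (c • (1 : Matrix (Fin m₂) (Fin m₂) ℝ) + S).PosDef :=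
    (posDef_smul Matrix.PosDef.one hc).add_posSemidef hSpsd
  set M := D * Dᵀ + c • E with hMdef
  set N := c • (1 : Matrix (Fin m₂) (Fin m₂) ℝ) + S with hNdef
  have hMdet : IsUnit M.det := (Matrix.isUnit_iff_isUnit_det M).mp hM.isUnit
  have hNdet : IsUnit N.det := (Matrix.isUnit_iff_isUnit_det N).mp hN.isUnit
  -- key identity: M * G = D * N
  have hkey : M * G = D * N := by
    rw [hMdef, hNdef, Matrix.add_mul, Matrix.mul_add, Matrix.mul_assoc, hDtG,
      Matrix.smul_mul, hEG, Matrix.mul_smul, Matrix.mul_one, add_comm]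
  have hmain : M⁻¹ * D = G * N⁻¹ := by
    calc M⁻¹ * D = M⁻¹ * (D * N) * N⁻¹ := by
          rw [Matrix.mul_assoc M⁻¹ (D * N) N⁻¹, Matrix.mul_assoc D N N⁻¹,
            Matrix.mul_nonsing_inv _ hNdet, Matrix.mul_one]
      _ = M⁻¹ * (M * G) * N⁻¹ := by rw [hkey]
      _ = G * N⁻¹ := by
          rw [← Matrix.mul_assoc, Matrix.nonsing_inv_mul _ hMdet, Matrix.one_mul]
  refine ⟨hM.isUnit, hN.isUnit, fun y => ?_⟩
  rw [Matrix.mulVec_mulVec, hmain]
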